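/- In the quotient space $\mathcal{V}(r,n)$ of the free vector space on $\mu_r$-labelled directed trees by the relations (3.1) and (3.2), every class $[T]$ equals the sum $\sum [\underline{\zeta} w . T_0]$ over all pairs $(\underline{\zeta}, w) \in Z \times S_n$ refining $T$, where $T_0$ is the chain $1\to 2\to\cdots\to n$ with all labels 1 and $Z = \{\underline{\zeta}\in\mu_r^n : \zeta_n = 1\}$. -/

import Mathlib

/-- A directed tree, encoded by the map `p` sending each vertex to the endpoint of its
unique outgoing edge; the root is sent to itself. -/
def IsTreeFn {I : Type*} (p : I → I) : Prop :=
  ∃ r : I, p r = r ∧ ∀ i : I, ∃ k : ℕ, p^[k] i = r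

/-- The set `𝒯(r,n)` of `μ_r`-labelled directed trees on `{1,…,n}`: a tree map together
with a labelling `ℓ` assigning to each non-root vertex `i` the label (an `r`-th root of
unity) of the edge `i → p i`; the root carries the trivial label `1`. -/
def LTree (r n : ℕ) : Type :=
  {T : (Fin n → Fin n) × (Fin n → ℂ) //
    IsTreeFn T.1 ∧ (∀ i, T.2 i ^ r = 1) ∧ (∀ i, T.1 i = i → T.2 i = 1)}

/-- Relation (3.1): `T₁, T₂, T₃` are identical except among distinct vertices `i,j,k`,
where `T₁` has `i →(ηθ⁻¹) j →(θ) k`, `T₂` has `j →(θη⁻¹) i →(η) k`, and `T₃` has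
`i →(η) k` and `j →(θ) k`. -/
def TripleRelL {r n : ℕ} (T1 T2 T3 : LTree r n) : Prop :=
  ∃ i j k : Fin n, ∃ η θ : ℂ, i ≠ j ∧ j ≠ k ∧ i ≠ k ∧
    T1.1.1 i = j ∧ T1.1.1 j = k ∧ T1.1.2 i = η * θ⁻¹ ∧ T1.1.2 j = θ ∧
    T2.1.1 j = i ∧ T2.1.1 i = k ∧ T2.1.2 j = θ * η⁻¹ ∧ T2.1.2 i = η ∧
    T3.1.1 i = k ∧ T3.1.1 j = k ∧ T3.1.2 i = η ∧ T3.1.2 j = θ ∧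
    ∀ a, a ≠ i → a ≠ j →
      T1.1.1 a = T2.1.1 a ∧ T2.1.1 a = T3.1.1 a ∧ T1.1.2 a = T2.1.2 a ∧ T2.1.2 a = T3.1.2 a

/-- Relation (3.2): `T'` is obtained from `T` by replacing the edge `i →(η) j` into the
root `j` by the edge `j →(η⁻¹) i` (so `i` becomes the root). -/
def PairRelL {r n : ℕ} (T T' : LTree r n) : Prop :=
  ∃ i j : Fin n, ∃ η : ℂ, i ≠ j ∧
    T.1.1 i = j ∧ T.1.1 j = j ∧ T.1.2 i = η ∧
    T'.1.1 j = i ∧ T'.1.1 i = i ∧ T'.1.2 j = η⁻¹ ∧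
    ∀ a, a ≠ i → a ≠ j → T.1.1 a = T'.1.1 a ∧ T.1.2 a = T'.1.2 a

/-- The defining relations of `𝒱(r,n)` inside the free vector space `ℂ𝒯(r,n)`. -/
def relSetL (r n : ℕ) : Set (LTree r n →₀ ℂ) :=
  {x | ∃ T1 T2 T3 : LTree r n, TripleRelL T1 T2 T3 ∧
        x = Finsupp.single T1 1 + Finsupp.single T2 1 - Finsupp.single T3 1} ∪
  {x | ∃ T T' : LTree r n, PairRelL T T' ∧
        x = Finsupp.single T 1 + Finsupp.single T' 1}

/-- The space `𝒱(r,n)`. -/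
def VL (r n : ℕ) : Type := (LTree r n →₀ ℂ) ⧸ Submodule.span ℂ (relSetL r n)

noncomputable instance (r n : ℕ) : AddCommGroup (VL r n) :=
  Submodule.Quotient.addCommGroup _

noncomputable instance (r n : ℕ) : Module ℂ (VL r n) := Submodule.Quotient.module _

/-- `T` is the chain `ζw.T₀`, the translate by `(ζ, w) ∈ μ_r^n × S_n` of the chain
`T₀ = (1 → 2 → ⋯ → n)` with trivial labels: its edges are `w(i) → w(i+1)` with label
`ζ_{w(i)} ζ_{w(i+1)}⁻¹`, and `w(n)` is its root. -/
def IsChainTree {r n : ℕ} (ζ : Fin n → ℂ) (w : Equiv.Perm (Fin n)) (T : LTree r n) : Prop :=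
  (∀ (i : Fin n) (hi : (i : ℕ) + 1 < n),
      T.1.1 (w i) = w ⟨(i : ℕ) + 1, hi⟩ ∧
      T.1.2 (w i) = ζ (w i) * (ζ (w ⟨(i : ℕ) + 1, hi⟩))⁻¹) ∧
  (∀ i : Fin n, (i : ℕ) + 1 = n → T.1.1 (w i) = w i ∧ T.1.2 (w i) = 1)

/-- The set `Z = {ζ ∈ μ_r^n | ζ_n = 1}`. -/
def Zset (r n : ℕ) : Type :=
  {ζ : Fin n → ℂ // (∀ i, ζ i ^ r = 1) ∧ ∀ i : Fin n, (i : ℕ) + 1 = n → ζ i = 1}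

/-- `(ζ, w)` refines `T`: every edge `i →(η) j` of `T` satisfies `w⁻¹(i) < w⁻¹(j)`
and `η = ζ_i ζ_j⁻¹`. -/
def RefinesL {r n : ℕ} (ζ : Fin n → ℂ) (w : Equiv.Perm (Fin n)) (T : LTree r n) : Prop :=
  ∀ i, T.1.1 i ≠ i →
    w.symm i < w.symm (T.1.1 i) ∧ T.1.2 i = ζ i * (ζ (T.1.1 i))⁻¹


open Finset Function

set_option linter.unusedSectionVars false
set_option maxHeartbeats 1000000

section TreeLemmas

variable {n : ℕ} {p : Fin n → Fin n} {ρ : Fin n}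

/-- If `b` is reachable from `a`, it is reachable in fewer than `n` steps. -/
lemma reach_small {a b : Fin n} (h : ∃ k, p^[k] a = b) : ∃ k < n, p^[k] a = b := by
  classical
  have hspec : p^[Nat.find h] a = b := Nat.find_spec h
  set K := Nat.find h with hK
  refine ⟨K, ?_, hspec⟩
  by_contra hKn
  push_neg at hKn
  have aux : ∀ s t : ℕ, s < t → t ≤ K → p^[s] a = p^[t] a → False := by
    intro s t hst htK heq
    have h1 : p^[K - t + s] a = b := by
      rw [Function.iterate_add_apply, heq, ← Function.iterate_add_apply]
      rw [show K - t + t = K by omega, hspec]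
    exact Nat.find_min h (by omega) h1
  have hinj : Function.Injective (fun m : Fin (K+1) => p^[(m : ℕ)] a) := by
    intro s t hst
    dsimp at hst
    rcases Nat.lt_trichotomy (s : ℕ) (t : ℕ) with hlt | heq | hgt
    · exact absurd hst (fun h' => aux s t hlt (by omega) h')
    · exact Fin.ext heq
    · exact absurd hst.symm (fun h' => aux t s hgt (by omega) h')
  have := Fintype.card_le_of_injective _ hinj
  simp at this
  omega

variable (hρ : p ρ = ρ) (hre : ∀ a, ∃ k, p^[k] a = ρ)

/-- Depth of a vertex: distance to the root. -/
noncomputable def dep (hre : ∀ a : Fin n, ∃ k, p^[k] a = ρ) (a : Fin n) : ℕ :=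
  Nat.find (hre a)

lemma dep_spec (a : Fin n) : p^[dep hre a] a = ρ := Nat.find_spec (hre a)

lemma dep_lt (a : Fin n) : dep hre a < n := by
  obtain ⟨k, hk, hk'⟩ := reach_small (hre a)
  exact lt_of_le_of_lt (Nat.find_min' (hre a) hk') hk

lemma dep_eq_zero_iff (a : Fin n) : dep hre a = 0 ↔ a = ρ := by
  constructor
  · intro h
    have := dep_spec hre a
    rw [h] at this; simpa using this
  · intro h; subst h
    exact Nat.find_eq_zero _ |>.2 (by simp)

include hρ hre

omit hρ in
lemma root_ne_imp {a : Fin n} (ha : a ≠ ρ) : p a ≠ a := by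
  intro h
  obtain ⟨k, hk⟩ := hre a
  rw [Function.iterate_fixed h] at hk
  exact ha hk

lemma cycle_root {b : Fin n} {k : ℕ} (hk : 0 < k) (hb : p^[k] b = b) : b = ρ := by
  have hall : ∀ t, p^[t * k] b = b := by
    intro t
    induction t with
    | zero => simp
    | succ t ih =>
      rw [Nat.succ_mul, Function.iterate_add_apply, hb, ih]
  obtain ⟨K, hK⟩ := hre b
  have h1 : p^[K * k] b = b := hall K
  have h2 : p^[K * k] b = ρ := by
    have hKK : K ≤ K * k := Nat.le_mul_of_pos_right K hk
    rw [show K * k = (K * k - K) + K by omega,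
      Function.iterate_add_apply, hK, Function.iterate_fixed hρ]
  rw [h1] at h2; exact h2

lemma dep_p {a : Fin n} (ha : a ≠ ρ) : dep hre (p a) + 1 = dep hre a := by
  have h1 : dep hre a ≠ 0 := fun h => ha ((dep_eq_zero_iff hre a).1 h)
  have h2 : p^[dep hre a - 1] (p a) = ρ := by
    rw [← Function.iterate_succ_apply]
    rw [show (dep hre a - 1).succ = dep hre a by omega]
    exact dep_spec hre a
  have h3 : dep hre (p a) ≤ dep hre a - 1 := Nat.find_min' _ h2
  have h4 : p^[dep hre (p a) + 1] a = ρ := by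
    rw [Function.iterate_succ_apply]; exact dep_spec hre (p a)
  have h5 : dep hre a ≤ dep hre (p a) + 1 := Nat.find_min' _ h4
  omega


/-- The ancestor set of a vertex. -/
noncomputable def ancS (p : Fin n → Fin n) (a : Fin n) : Finset (Fin n) :=
  (Finset.range n).image (fun k => p^[k] a)

omit hρ hre in
lemma mem_ancS {a b : Fin n} : b ∈ ancS p a ↔ ∃ k, p^[k] a = b := by
  constructor
  · intro h
    obtain ⟨k, _, hk⟩ := Finset.mem_image.1 h
    exact ⟨k, hk⟩
  · intro h
    obtain ⟨k, hk, hk'⟩ := reach_small h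
    exact Finset.mem_image.2 ⟨k, Finset.mem_range.2 hk, hk'⟩

/-- The measure: total number of (vertex, ancestor) pairs. -/
noncomputable def mu (p : Fin n → Fin n) : ℕ := ∑ a, (ancS p a).card

omit hρ hre in
lemma mu_le : mu p ≤ n * n := by
  have : ∀ a : Fin n, (ancS p a).card ≤ n := by
    intro a
    have := Finset.card_le_univ (ancS p a)
    simpa using this
  calc mu p ≤ ∑ _a : Fin n, n := Finset.sum_le_sum (fun a _ => this a)
    _ = n * n := by simp [Finset.sum_const, mul_comm]

section Update

variable {i j v : Fin n} (hpi : p i = v) (hpj : p j = v) (hij : i ≠ j)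
  (hiv : i ≠ v) (hjv : j ≠ v)

omit hρ hre in
include hpi hpj hij hiv hjv hρ hre in
lemma no_i_on_j_path : ∀ k, p^[k] j ≠ i := by
  intro k hk
  rcases Nat.eq_zero_or_pos k with rfl | hkpos
  · simp at hk; exact hij hk.symm
  · have h1 : p^[k] v = v := by
      have : p^[k+1] j = v := by
        rw [Function.iterate_succ_apply', hk, hpi]
      rw [Function.iterate_succ_apply, hpj] at this
      exact this
    have hv : v = ρ := cycle_root hρ hre hkpos h1
    have h3 : p^[k] j = p^[k-1] v := by
      conv_lhs => rw [show k = (k-1) + 1 by omega]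
      rw [Function.iterate_succ_apply, hpj]
    have h2 : i = ρ := by rw [← hk, h3, hv, Function.iterate_fixed hρ]
    exact hiv (h2.trans hv.symm)

omit hρ hre in
lemma iterate_update_of_avoid {a : Fin n} {k : ℕ}
    (h : ∀ m < k, p^[m] a ≠ i) : (Function.update p i j)^[k] a = p^[k] a := by
  induction k with
  | zero => simp
  | succ k ih =>
    rw [Function.iterate_succ_apply', Function.iterate_succ_apply',
      ih (fun m hm => h m (by omega)),
      Function.update_of_ne (h k (by omega))]

include hpi hpj hij hiv hjv in
lemma tree_update : Function.update p i j ρ = ρ ∧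
    ∀ a, ∃ k, (Function.update p i j)^[k] a = ρ := by
  have hiρ : i ≠ ρ := by
    intro h
    have hv : v = ρ := by rw [← hpi, h, hρ]
    exact hiv (h.trans hv.symm)
  constructor
  · rw [Function.update_of_ne (fun h => hiρ h.symm), hρ]
  · have hj : ∀ k, (Function.update p i j)^[k] j = p^[k] j := fun k =>
      iterate_update_of_avoid (fun m _ => no_i_on_j_path hρ hre hpi hpj hij hiv hjv m)
    have hjre : ∃ k, (Function.update p i j)^[k] j = ρ := by
      obtain ⟨k, hk⟩ := hre j
      exact ⟨k, (hj k).trans hk⟩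
    have main : ∀ m, ∀ a : Fin n, dep hre a = m → ∃ k, (Function.update p i j)^[k] a = ρ := by
      intro m
      induction m using Nat.strong_induction_on with
      | _ m ih =>
        intro a hm
        by_cases haρ : a = ρ
        · exact ⟨0, by simp [haρ]⟩
        by_cases hai : a = i
        · subst hai
          obtain ⟨k, hk⟩ := hjre
          refine ⟨k + 1, ?_⟩
          rw [Function.iterate_succ_apply, Function.update_self]
          exact hk
        · have hd : dep hre (p a) + 1 = dep hre a := dep_p hρ hre haρ
          obtain ⟨k, hk⟩ := ih (dep hre (p a)) (by omega) (p a) rfl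
          refine ⟨k + 1, ?_⟩
          rw [Function.iterate_succ_apply, Function.update_of_ne hai]
          exact hk
    exact fun a => main (dep hre a) a rfl


include hpi hpj hij hiv hjv in
lemma anc_subset_update (a : Fin n) : ancS p a ⊆ ancS (Function.update p i j) a := by
  intro b hb
  obtain ⟨k, hk⟩ := mem_ancS.1 hb
  rw [mem_ancS]
  by_cases h : ∀ m < k, p^[m] a ≠ i
  · exact ⟨k, (iterate_update_of_avoid h).trans hk⟩
  · push_neg at h
    have hex : ∃ m, p^[m] a = i := by obtain ⟨m, _, hm⟩ := h; exact ⟨m, hm⟩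
    classical
    set s := Nat.find hex with hs
    have hsspec : p^[s] a = i := Nat.find_spec hex
    have hsk : s < k := by
      obtain ⟨m, hmk, hm⟩ := h
      exact lt_of_le_of_lt (Nat.find_min' hex hm) hmk
    have hup : ∀ m ≤ s, (Function.update p i j)^[m] a = p^[m] a := by
      intro m hm
      exact iterate_update_of_avoid (fun m' hm' => Nat.find_min hex (by omega))
    -- key shift: for t ≥ 1, (update)^[s+1+t] a = p^[s+t] a
    have hiρ : i ≠ ρ := by
      intro h'
      have hv : v = ρ := by rw [← hpi, h', hρ]
      exact hiv (h'.trans hv.symm)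
    have hit : ∀ t, 1 ≤ t → p^[t] i ≠ i := by
      intro t ht hcontra
      exact hiρ (cycle_root hρ hre ht hcontra)
    have shift : ∀ t, 1 ≤ t → (Function.update p i j)^[s + 1 + t] a = p^[s + t] a := by
      intro t ht
      induction t with
      | zero => omega
      | succ t iht =>
        rcases Nat.eq_zero_or_pos t with rfl | htpos
        · have h1 : (Function.update p i j)^[s + 1] a = j := by
            rw [Function.iterate_succ_apply', hup s le_rfl, hsspec, Function.update_self]
          have : (Function.update p i j)^[s + 1 + 1] a = p j := by
            rw [Function.iterate_succ_apply', h1, Function.update_of_ne (fun h' => hij h'.symm)]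
          rw [this, hpj, Function.iterate_succ_apply', hsspec, hpi]
        · have h1 := iht htpos
          rw [show s + 1 + (t + 1) = (s + 1 + t) + 1 by omega, Function.iterate_succ_apply', h1]
          have h2 : p^[s + t] a = p^[t] i := by
            rw [show s + t = t + s by omega, Function.iterate_add_apply, hsspec]
          rw [Function.update_of_ne (h2 ▸ hit t htpos), show s + (t+1) = (s + t) + 1 by omega,
            Function.iterate_succ_apply']
    refine ⟨k + 1, ?_⟩
    have := shift (k - s) (by omega)
    rw [show s + 1 + (k - s) = k + 1 by omega, show s + (k - s) = k by omega] at this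
    rw [this, hk]

include hpi hpj hij hiv hjv in
lemma anc_strict_update : j ∉ ancS p i ∧ j ∈ ancS (Function.update p i j) i := by
  constructor
  · intro hmem
    obtain ⟨k, hk⟩ := mem_ancS.1 hmem
    rcases Nat.eq_zero_or_pos k with rfl | hkpos
    · simp at hk; exact hij hk
    · have h1 : p^[k] v = v := by
        have : p^[k+1] i = v := by rw [Function.iterate_succ_apply', hk, hpj]
        rw [Function.iterate_succ_apply, hpi] at this
        exact this
      have hv : v = ρ := cycle_root hρ hre hkpos h1
      have h3 : p^[k] i = p^[k-1] v := by
        conv_lhs => rw [show k = (k-1) + 1 by omega]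
        rw [Function.iterate_succ_apply, hpi]
      have h2 : j = ρ := by rw [← hk, h3, hv, Function.iterate_fixed hρ]
      exact hjv (h2.trans hv.symm)
  · rw [mem_ancS]
    exact ⟨1, by simp⟩

include hpi hpj hij hiv hjv in
lemma mu_lt_update : mu p < mu (Function.update p i j) := by
  apply Finset.sum_lt_sum
  · intro a _
    exact Finset.card_le_card (anc_subset_update hρ hre hpi hpj hij hiv hjv a)
  · refine ⟨i, Finset.mem_univ i, ?_⟩
    apply Finset.card_lt_card
    rw [Finset.ssubset_iff_of_subset (anc_subset_update hρ hre hpi hpj hij hiv hjv i)]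
    obtain ⟨h1, h2⟩ := anc_strict_update hρ hre hpi hpj hij hiv hjv
    exact ⟨j, h2, h1⟩

end Update

end TreeLemmas


section LTreeLemmas

variable {r n : ℕ}

lemma pow_eq_one_ne_zero {x : ℂ} {r : ℕ} (hr : 0 < r) (h : x ^ r = 1) : x ≠ 0 := by
  intro h0
  rw [h0, zero_pow hr.ne'] at h
  exact zero_ne_one h

/-- Two trees that are both the chain `ζw.T₀` are equal. -/
lemma chain_tree_unique {ζ : Fin n → ℂ} {w : Equiv.Perm (Fin n)} {T T' : LTree r n}
    (h : IsChainTree ζ w T) (h' : IsChainTree ζ w T') : T = T' := by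
  apply Subtype.ext
  apply Prod.ext
  · funext a
    have ha : a = w (w.symm a) := (w.apply_symm_apply a).symm
    set t := w.symm a with hts
    rcases lt_or_ge ((t : ℕ) + 1) n with hlt | hge
    · rw [ha, (h.1 t hlt).1, (h'.1 t hlt).1]
    · have heq : (t : ℕ) + 1 = n := by omega
      rw [ha, (h.2 t heq).1, (h'.2 t heq).1]
  · funext a
    have ha : a = w (w.symm a) := (w.apply_symm_apply a).symm
    set t := w.symm a with hts
    rcases lt_or_ge ((t : ℕ) + 1) n with hlt | hge
    · rw [ha, (h.1 t hlt).2, (h'.1 t hlt).2]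
    · have heq : (t : ℕ) + 1 = n := by omega
      rw [ha, (h.2 t heq).2, (h'.2 t heq).2]


/-- A function on `Fin n` increasing on adjacent positions is strictly monotone. -/
lemma fin_strictMono_of_adj {n : ℕ} {α : Type*} [Preorder α] {f : Fin n → α}
    (h : ∀ (t : Fin n) (ht : (t : ℕ) + 1 < n), f t < f ⟨(t : ℕ) + 1, ht⟩) :
    StrictMono f := by
  have key : ∀ (k : ℕ) (s : Fin n) (hk : (s : ℕ) + k < n), 0 < k → f s < f ⟨(s : ℕ) + k, hk⟩ := by
    intro k
    induction k with
    | zero => intro s hk h0; omega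
    | succ k ih =>
      intro s hk h0
      rcases Nat.eq_zero_or_pos k with rfl | hkpos
      · exact h s hk
      · exact lt_trans (ih s (by omega) hkpos) (h ⟨(s : ℕ) + k, by omega⟩ (by show (s : ℕ) + k + 1 < n; omega))
  intro s t hst
  have hlt : (s : ℕ) < (t : ℕ) := hst
  have := key ((t : ℕ) - (s : ℕ)) s (by omega) (by omega)
  have he : (⟨(s : ℕ) + ((t : ℕ) - (s : ℕ)), by omega⟩ : Fin n) = t := Fin.ext (by simp; omega)
  rwa [he] at this

end LTreeLemmas

section BaseCase

variable {r n : ℕ}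

/-- If `T` has no fork (each vertex has at most one child), then it is a chain, and there
is exactly one refining pair, whose chain tree is `T` itself. -/
lemma no_fork_chain (hr : 0 < r) (hn : 0 < n) (T : LTree r n)
    (hnf : ∀ a b : Fin n, T.1.1 a = T.1.1 b → a ≠ T.1.1 a → b ≠ T.1.1 b → a = b) :
    ∃ (Z0 : Zset r n) (w : Equiv.Perm (Fin n)),
      IsChainTree Z0.1 w T ∧
      ∀ (ζ' : Zset r n) (w' : Equiv.Perm (Fin n)),
        (RefinesL ζ'.1 w' T ↔ (ζ', w') = (Z0, w)) := by
  obtain ⟨ρ, hρ, hre⟩ := T.2.1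
  set p := T.1.1 with hpdef
  set ℓ := T.1.2 with hldef
  -- depth is injective
  have dinj : ∀ m (a b : Fin n), dep hre a = m → dep hre b = m → a = b := by
    intro m
    induction m using Nat.strong_induction_on with
    | _ m ih =>
      intro a b ha hb
      rcases Nat.eq_zero_or_pos m with rfl | hm
      · rw [(dep_eq_zero_iff hre a).1 ha, (dep_eq_zero_iff hre b).1 hb]
      · have haρ : a ≠ ρ := fun h => by rw [h, (dep_eq_zero_iff hre ρ).2 rfl] at ha; omega
        have hbρ : b ≠ ρ := fun h => by rw [h, (dep_eq_zero_iff hre ρ).2 rfl] at hb; omega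
        have hda := dep_p hρ hre haρ
        have hdb := dep_p hρ hre hbρ
        have hpab : p a = p b := ih (m - 1) (by omega) _ _ (by omega) (by omega)
        exact hnf a b hpab (fun h => root_ne_imp hre haρ h.symm) (fun h => root_ne_imp hre hbρ h.symm)
  -- the ordering map
  have hdlt : ∀ a, dep hre a < n := dep_lt hre
  set e : Fin n → Fin n := fun a => ⟨n - 1 - dep hre a, by have := hdlt a; omega⟩ with hedef
  have einj : Function.Injective e := by
    intro a b hab
    have h1 : n - 1 - dep hre a = n - 1 - dep hre b := congrArg Fin.val hab
    have := hdlt a; have := hdlt b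
    exact dinj (dep hre a) a b rfl (by omega)
  set w : Equiv.Perm (Fin n) :=
    (Equiv.ofBijective e ⟨einj, Finite.surjective_of_injective einj⟩).symm with hwdef
  have hwsymm : ∀ a, w.symm a = e a := fun a => rfl
  have hwe : ∀ a, w (e a) = a := fun a =>
    (Equiv.ofBijective e ⟨einj, Finite.surjective_of_injective einj⟩).symm_apply_apply a
  have hdw : ∀ t : Fin n, dep hre (w t) = n - 1 - (t : ℕ) := by
    intro t
    have h1 : e (w t) = t := by rw [← hwsymm (w t)]; exact w.symm_apply_apply t
    have h2 : n - 1 - dep hre (w t) = (t : ℕ) := congrArg Fin.val h1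
    have := hdlt (w t); have := t.isLt; omega
  -- the cumulative label product
  set lam : Fin n → ℂ := fun a => ∏ k ∈ Finset.range (dep hre a), ℓ (p^[k] a) with hlamdef
  have lam_root : lam ρ = 1 := by
    rw [hlamdef]; simp [(dep_eq_zero_iff hre ρ).2 rfl]
  have lam_rec : ∀ a, a ≠ ρ → lam a = ℓ a * lam (p a) := by
    intro a ha
    have hd := dep_p hρ hre ha
    rw [hlamdef]
    simp only []
    rw [show dep hre a = dep hre (p a) + 1 from hd.symm, Finset.prod_range_succ']
    simp only [Function.iterate_succ_apply, Function.iterate_zero_apply]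
    ring
  have lam_pow : ∀ a, lam a ^ r = 1 := by
    intro a
    rw [hlamdef]
    simp only []
    rw [← Finset.prod_pow]
    apply Finset.prod_eq_one
    intro k _
    exact T.2.2.1 _
  have lam_ne : ∀ a, lam a ≠ 0 := fun a => pow_eq_one_ne_zero hr (lam_pow a)
  set last : Fin n := ⟨n - 1, by omega⟩ with hlastdef
  set ζ0 : Fin n → ℂ := fun a => lam a * (lam last)⁻¹ with hz0def
  have hz0pow : ∀ a, ζ0 a ^ r = 1 := by
    intro a
    rw [hz0def]
    simp only []
    rw [mul_pow, inv_pow, lam_pow, lam_pow]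
    norm_num
  have hz0last : ∀ i : Fin n, (i : ℕ) + 1 = n → ζ0 i = 1 := by
    intro i hi
    have : i = last := Fin.ext (by show (i : ℕ) = n - 1; omega)
    rw [this, hz0def]
    exact mul_inv_cancel₀ (lam_ne last)
  set Z0 : Zset r n := ⟨ζ0, hz0pow, hz0last⟩ with hZ0def
  have hz0ne : ∀ a, ζ0 a ≠ 0 := fun a => pow_eq_one_ne_zero hr (hz0pow a)
  have hlabel : ∀ a, a ≠ ρ → ℓ a = ζ0 a * (ζ0 (p a))⁻¹ := by
    intro a ha
    have h1 := lam_rec a ha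
    show ℓ a = (lam a * (lam last)⁻¹) * (lam (p a) * (lam last)⁻¹)⁻¹
    rw [h1]
    field_simp [lam_ne (p a), lam_ne last]
    try ring
  -- chain structure
  have hwροt : ∀ t : Fin n, (t : ℕ) + 1 = n → w t = ρ := by
    intro t ht
    have := hdw t
    have hz : dep hre (w t) = 0 := by omega
    exact (dep_eq_zero_iff hre _).1 hz
  have hwadj : ∀ (t : Fin n) (ht : (t : ℕ) + 1 < n),
      w t ≠ ρ ∧ p (w t) = w ⟨(t : ℕ) + 1, ht⟩ := by
    intro t ht
    have hd1 := hdw t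
    have haρ : w t ≠ ρ := by
      intro h
      rw [h, (dep_eq_zero_iff hre ρ).2 rfl] at hd1
      omega
    refine ⟨haρ, ?_⟩
    have hd2 := dep_p hρ hre haρ
    have h3 : e (p (w t)) = ⟨(t : ℕ) + 1, ht⟩ := Fin.ext (by
      show n - 1 - dep hre (p (w t)) = (t : ℕ) + 1
      omega)
    rw [← h3, hwe]
  have hchain : IsChainTree ζ0 w T := by
    constructor
    · intro t ht
      obtain ⟨haρ, hpa⟩ := hwadj t ht
      refine ⟨hpa, ?_⟩
      rw [← hpa]
      exact hlabel (w t) haρ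
    · intro t ht
      have h1 := hwροt t ht
      rw [h1]
      exact ⟨hρ, T.2.2.2 ρ hρ⟩
  refine ⟨Z0, w, hchain, ?_⟩
  intro ζ' w'
  constructor
  · intro href
    -- uniqueness of w
    have hwtρ : ∀ (t : Fin n), (t : ℕ) + 1 < n → p (w t) ≠ w t := by
      intro t ht
      exact fun h => root_ne_imp hre (hwadj t ht).1 h
    have hmono : StrictMono (fun t => w'.symm (w t)) := by
      apply fin_strictMono_of_adj
      intro t ht
      have h1 : w'.symm (w t) < w'.symm (p (w t)) := (href (w t) (hwtρ t ht)).1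
      rw [(hwadj t ht).2] at h1
      exact h1
    have hrange : Set.range (fun t => w'.symm (w t)) = Set.range (id : Fin n → Fin n) := by
      rw [Set.range_id]
      apply Set.range_eq_univ.2
      exact (w'.symm.surjective).comp w.surjective
    have hfid : (fun t => w'.symm (w t)) = id := (hmono.range_inj strictMono_id).1 hrange
    have hww' : w' = w := by
      apply Equiv.ext
      intro t
      have h1 : w'.symm (w t) = t := congrFun hfid t
      calc w' t = w' (w'.symm (w t)) := by rw [h1]
        _ = w t := w'.apply_symm_apply _
    -- uniqueness of ζ
    have hz'ne : ∀ a, ζ'.1 a ≠ 0 := fun a => pow_eq_one_ne_zero hr (ζ'.2.1 a)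
    have hz'val : ∀ m (a : Fin n), dep hre a = m → ζ'.1 a = lam a * ζ'.1 ρ := by
      intro m
      induction m using Nat.strong_induction_on with
      | _ m ih =>
        intro a ha
        rcases Nat.eq_zero_or_pos m with rfl | hm
        · rw [(dep_eq_zero_iff hre a).1 ha, lam_root, one_mul]
        · have haρ : a ≠ ρ := fun h => by
            rw [h, (dep_eq_zero_iff hre ρ).2 rfl] at ha; omega
          have hpa : p a ≠ a := root_ne_imp hre haρ
          have h1 : ℓ a = ζ'.1 a * (ζ'.1 (p a))⁻¹ := (href a hpa).2
          have hd := dep_p hρ hre haρ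
          have h2 := ih (dep hre (p a)) (by omega) (p a) rfl
          have h3 : ζ'.1 a = ℓ a * ζ'.1 (p a) := by
            rw [h1]
            field_simp [hz'ne]
          rw [h3, h2, lam_rec a haρ]
          ring
    have hz'last : ζ'.1 last = 1 := ζ'.2.2 last (by show n - 1 + 1 = n; omega)
    have hz'ρ : ζ'.1 ρ = (lam last)⁻¹ := by
      have h1 := hz'val (dep hre last) last rfl
      rw [hz'last] at h1
      field_simp [lam_ne] at h1 ⊢
      linear_combination -h1
    have hzz' : ζ' = Z0 := by
      apply Subtype.ext
      funext a
      show ζ'.1 a = lam a * (lam last)⁻¹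
      rw [hz'val (dep hre a) a rfl, hz'ρ]
    rw [hzz', hww']
  · intro h
    have h1 : ζ' = Z0 := congrArg Prod.fst h
    have h2 : w' = w := congrArg Prod.snd h
    subst h1; subst h2
    -- show RefinesL ζ0 w T
    intro a hpa
    have haρ : a ≠ ρ := fun h => hpa (h ▸ hρ)
    constructor
    · rw [hwsymm, hwsymm]
      have hd := dep_p hρ hre haρ
      have hda := hdlt a
      show (n - 1 - dep hre a : ℕ) < n - 1 - dep hre (p a)
      have hdz : dep hre a ≠ 0 := fun h => haρ ((dep_eq_zero_iff hre a).1 h)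
      omega
    · exact hlabel a haρ

end BaseCase

section Fork

variable {r n : ℕ}

lemma split_prop (hr : 0 < r) (T : LTree r n) {i j v : Fin n}
    (hpi : T.1.1 i = v) (hpj : T.1.1 j = v) (hij : i ≠ j) (hiv : i ≠ v) (hjv : j ≠ v) :
    IsTreeFn (Function.update T.1.1 i j) ∧
    (∀ a, Function.update T.1.2 i (T.1.2 i * (T.1.2 j)⁻¹) a ^ r = 1) ∧
    (∀ a, Function.update T.1.1 i j a = a →
      Function.update T.1.2 i (T.1.2 i * (T.1.2 j)⁻¹) a = 1) := by
  obtain ⟨ρ, hρ, hre⟩ := T.2.1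
  have htree := tree_update hρ hre hpi hpj hij hiv hjv
  refine ⟨⟨ρ, htree.1, htree.2⟩, ?_, ?_⟩
  · intro a
    by_cases ha : a = i
    · subst ha
      rw [Function.update_self, mul_pow, inv_pow, T.2.2.1, T.2.2.1, inv_one, mul_one]
    · rw [Function.update_of_ne ha]
      exact T.2.2.1 a
  · intro a ha
    by_cases hai : a = i
    · subst hai
      rw [Function.update_self] at ha
      exact absurd ha.symm hij
    · rw [Function.update_of_ne hai] at ha
      rw [Function.update_of_ne hai]
      exact T.2.2.2 a ha

lemma refines_split (hr : 0 < r) (T T' : LTree r n) {i j v : Fin n}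
    (hpi : T.1.1 i = v) (hpj : T.1.1 j = v) (hij : i ≠ j) (hiv : i ≠ v) (hjv : j ≠ v)
    (hT'p : T'.1.1 = Function.update T.1.1 i j)
    (hT'l : T'.1.2 = Function.update T.1.2 i (T.1.2 i * (T.1.2 j)⁻¹))
    (ζ : Fin n → ℂ) (hζpow : ∀ a, ζ a ^ r = 1) (w : Equiv.Perm (Fin n)) :
    RefinesL ζ w T' ↔ (RefinesL ζ w T ∧ w.symm i < w.symm j) := by
  have hζne : ∀ a, ζ a ≠ 0 := fun a => pow_eq_one_ne_zero hr (hζpow a)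
  have hlne : ∀ a, T.1.2 a ≠ 0 := fun a => pow_eq_one_ne_zero hr (T.2.2.1 a)
  have hTi : T.1.1 i ≠ i := by rw [hpi]; exact fun h => hiv h.symm
  have hTj : T.1.1 j ≠ j := by rw [hpj]; exact fun h => hjv h.symm
  have hT'i : T'.1.1 i = j := by rw [hT'p, Function.update_self]
  have hT'j : T'.1.1 j = T.1.1 j := by rw [hT'p, Function.update_of_ne (Ne.symm hij)]
  have hT'li : T'.1.2 i = T.1.2 i * (T.1.2 j)⁻¹ := by rw [hT'l, Function.update_self]
  constructor
  · intro href'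
    have h1 := href' i (by rw [hT'i]; exact Ne.symm hij)
    rw [hT'i, hT'li] at h1
    have h2 := href' j (by rw [hT'j]; exact hTj)
    rw [hT'j, hT'l, Function.update_of_ne (Ne.symm hij)] at h2
    constructor
    · intro a ha
      by_cases hai : a = i
      · subst hai
        rw [hpi]
        rw [hpj] at h2
        refine ⟨lt_trans h1.1 h2.1, ?_⟩
        have hx : T.1.2 a = (ζ a * (ζ j)⁻¹) * T.1.2 j := by
          rw [← h1.2]
          field_simp [hlne j]
        rw [hx, h2.2]
        field_simp [hζne j, hζne v]
        try ring
      · have hpa : T'.1.1 a = T.1.1 a := by rw [hT'p, Function.update_of_ne hai]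
        have hla : T'.1.2 a = T.1.2 a := by rw [hT'l, Function.update_of_ne hai]
        have := href' a (by rw [hpa]; exact ha)
        rw [hpa, hla] at this
        exact this
    · exact h1.1
  · rintro ⟨href, hlt⟩
    intro a ha
    by_cases hai : a = i
    · subst hai
      rw [hT'i, hT'li]
      refine ⟨hlt, ?_⟩
      have h1 := (href a hTi).2
      have h2 := (href j hTj).2
      rw [hpi] at h1
      rw [hpj] at h2
      rw [h1, h2]
      field_simp [hζne j, hζne v]
      try ring
    · have hpa : T'.1.1 a = T.1.1 a := by rw [hT'p, Function.update_of_ne hai]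
      have hla : T'.1.2 a = T.1.2 a := by rw [hT'l, Function.update_of_ne hai]
      rw [hpa, hla]
      exact href a (by rw [hpa] at ha; exact ha)

end Fork

/-- In `𝒱(r,n)`, every class `[T]` equals `∑ [ζw.T₀]`, summed over the pairs
`(ζ, w) ∈ Z × S_n` refining `T`.  Here `c ζ w` denotes the chain tree `ζw.T₀`, and `S` is
the (finite) set of refining pairs. -/
theorem stmt14 (r n : ℕ) (hr : 0 < r) (hn : 0 < n)
    (c : Zset r n → Equiv.Perm (Fin n) → LTree r n)
    (hc : ∀ ζ w, IsChainTree ζ.1 w (c ζ w))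
    (T : LTree r n)
    (S : Finset (Zset r n × Equiv.Perm (Fin n)))
    (hS : ∀ x : Zset r n × Equiv.Perm (Fin n), x ∈ S ↔ RefinesL x.1.1 x.2 T) :
    (Submodule.Quotient.mk (Finsupp.single T (1 : ℂ)) : VL r n)
      = ∑ x ∈ S, Submodule.Quotient.mk (Finsupp.single (c x.1 x.2) (1 : ℂ)) := by
  classical
  have main : ∀ (m : ℕ) (T : LTree r n) (S : Finset (Zset r n × Equiv.Perm (Fin n))),
      (∀ x : Zset r n × Equiv.Perm (Fin n), x ∈ S ↔ RefinesL x.1.1 x.2 T) →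
      n * n - mu T.1.1 = m →
      (Submodule.Quotient.mk (Finsupp.single T (1 : ℂ)) : VL r n)
        = ∑ x ∈ S, Submodule.Quotient.mk (Finsupp.single (c x.1 x.2) (1 : ℂ)) := by
    intro m
    induction m using Nat.strong_induction_on with
    | _ m ih =>
      intro T S hS hm
      by_cases hnf : ∀ a b : Fin n, T.1.1 a = T.1.1 b → a ≠ T.1.1 a → b ≠ T.1.1 b → a = b
      · -- base case: `T` is a chain
        obtain ⟨Z0, w, hchain, huniq⟩ := no_fork_chain hr hn T hnf
        have hSeq : S = {(Z0, w)} := by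
          ext x
          rw [hS x, Finset.mem_singleton, huniq x.1 x.2]
        have hTeq : T = c Z0 w := chain_tree_unique hchain (hc Z0 w)
        rw [hSeq, Finset.sum_singleton, hTeq]
      · -- inductive step: split a fork
        push_neg at hnf
        obtain ⟨a, b, hab, hane, hbne, habne⟩ := hnf
        have hjv : b ≠ T.1.1 a := fun h => hbne (by rw [← hab]; exact h)
        set T1 : LTree r n :=
          ⟨(Function.update T.1.1 a b, Function.update T.1.2 a (T.1.2 a * (T.1.2 b)⁻¹)),
            split_prop hr T rfl hab.symm habne hane hjv⟩ with hT1def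
        set T2 : LTree r n :=
          ⟨(Function.update T.1.1 b a, Function.update T.1.2 b (T.1.2 b * (T.1.2 a)⁻¹)),
            split_prop hr T hab.symm rfl (Ne.symm habne) hjv hane⟩ with hT2def
        have hrel : TripleRelL T1 T2 T := by
          refine ⟨a, b, T.1.1 a, T.1.2 a, T.1.2 b, habne, hjv, hane, ?_, ?_, ?_, ?_, ?_, ?_, ?_, ?_,
            rfl, hab.symm, rfl, rfl, ?_⟩
          · exact Function.update_self a b T.1.1
          · show Function.update T.1.1 a b b = T.1.1 a
            rw [Function.update_of_ne (Ne.symm habne), ← hab]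
          · exact Function.update_self a _ T.1.2
          · show Function.update T.1.2 a _ b = T.1.2 b
            rw [Function.update_of_ne (Ne.symm habne)]
          · exact Function.update_self b a T.1.1
          · show Function.update T.1.1 b a a = T.1.1 a
            rw [Function.update_of_ne habne]
          · exact Function.update_self b _ T.1.2
          · show Function.update T.1.2 b _ a = T.1.2 a
            rw [Function.update_of_ne habne]
          · intro x hxa hxb
            refine ⟨?_, ?_, ?_, ?_⟩
            · show Function.update T.1.1 a b x = Function.update T.1.1 b a x
              rw [Function.update_of_ne hxa, Function.update_of_ne hxb]
            · show Function.update T.1.1 b a x = T.1.1 x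
              rw [Function.update_of_ne hxb]
            · show Function.update T.1.2 a _ x = Function.update T.1.2 b _ x
              rw [Function.update_of_ne hxa, Function.update_of_ne hxb]
            · show Function.update T.1.2 b _ x = T.1.2 x
              rw [Function.update_of_ne hxb]
        have hx : Finsupp.single T1 (1 : ℂ) + Finsupp.single T2 1 - Finsupp.single T 1 ∈
            Submodule.span ℂ (relSetL r n) :=
          Submodule.subset_span (Set.mem_union_left _ ⟨T1, T2, T, hrel, rfl⟩)
        have hspan : (Submodule.Quotient.mk (Finsupp.single T (1 : ℂ)) : VL r n) =
            Submodule.Quotient.mk (Finsupp.single T1 (1 : ℂ)) +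
              Submodule.Quotient.mk (Finsupp.single T2 (1 : ℂ)) := by
          rw [← Submodule.Quotient.mk_add, Submodule.Quotient.eq]
          have heq : Finsupp.single T (1 : ℂ) - (Finsupp.single T1 1 + Finsupp.single T2 1) =
              -(Finsupp.single T1 1 + Finsupp.single T2 1 - Finsupp.single T 1) := by abel
          rw [heq]
          exact neg_mem hx
        set S1 := S.filter (fun x => x.2.symm a < x.2.symm b) with hS1def
        set S2 := S.filter (fun x => ¬ (x.2.symm a < x.2.symm b)) with hS2def
        have hS1 : ∀ x : Zset r n × Equiv.Perm (Fin n), x ∈ S1 ↔ RefinesL x.1.1 x.2 T1 := by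
          intro x
          rw [hS1def, Finset.mem_filter, hS x,
            refines_split hr T T1 rfl hab.symm habne hane hjv rfl rfl x.1.1 x.1.2.1 x.2]
        have hS2 : ∀ x : Zset r n × Equiv.Perm (Fin n), x ∈ S2 ↔ RefinesL x.1.1 x.2 T2 := by
          intro x
          rw [hS2def, Finset.mem_filter, hS x,
            refines_split hr T T2 hab.symm rfl (Ne.symm habne) hjv hane rfl rfl x.1.1 x.1.2.1 x.2]
          have hne : x.2.symm a ≠ x.2.symm b := fun h => habne (x.2.symm.injective h)
          constructor
          · rintro ⟨h1, h2⟩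
            exact ⟨h1, lt_of_le_of_ne (not_lt.1 h2) (Ne.symm hne)⟩
          · rintro ⟨h1, h2⟩
            exact ⟨h1, not_lt.2 (le_of_lt h2)⟩
        obtain ⟨ρ, hρ, hre⟩ := T.2.1
        have hmu1 : mu T.1.1 < mu T1.1.1 := mu_lt_update hρ hre rfl hab.symm habne hane hjv
        have hmu2 : mu T.1.1 < mu T2.1.1 :=
          mu_lt_update hρ hre hab.symm rfl (Ne.symm habne) hjv hane
        have hb1 : mu T1.1.1 ≤ n * n := mu_le
        have hb2 : mu T2.1.1 ≤ n * n := mu_le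
        rw [hspan, ih (n * n - mu T1.1.1) (by omega) T1 S1 hS1 rfl,
          ih (n * n - mu T2.1.1) (by omega) T2 S2 hS2 rfl]
        exact Finset.sum_filter_add_sum_filter_not S _ _
  exact main (n * n - mu T.1.1) T S hS rfl
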